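/- The standard protocol P^∅ implements the knowledge-based program 𝐏 (instantiated with next(h) = |h| mod |L_in| and σ(h) = ∅) with respect to the context γ_∅(F) for each adversary model F ∈ {NF, CR, SO}. -/

import Mathlib

open scoped Classical

noncomputable section

namespace Inter

/-- Actions available to each agent. -/
inductive Act where
  | go
  | noop
deriving DecidableEq

/-- A move through the intersection: an incoming lane paired with an outgoing lane. -/
abbrev Move (kin kout : ℕ) := Fin kin × Fin kout

/-- An adversary: a conflict-free arrival schedule, a transmission environment and
transmitter/receiver failure functions. -/
structure Adversary (kin kout : ℕ) where
  arrive : ℕ → ℕ × Fin kin × Fin kout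
  conflictFree : ∀ i j : ℕ, i ≠ j → (arrive i).1 = (arrive j).1 →
    (arrive i).2.1 ≠ (arrive j).2.1
  T : Set ((Fin kin × ℕ) × (Fin kin × ℕ))
  T_front : ∀ l l' : Fin kin, ((l, 0), (l', 0)) ∈ T
  Ft : ℕ → ℕ → Bool
  Fr : ℕ → ℕ → Bool

/-- The lane component of a sensor reading: an incoming lane, ⊥ (not yet arrived),
or ⊤ (departed). -/
inductive LaneStatus (kin : ℕ) where
  | inLane (l : Fin kin)
  | notArrived
  | finished

/-- The minimal sensor reading: front, lane and intent. -/
structure Reading (kin kout : ℕ) where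
  front : Prop
  lane : LaneStatus kin
  intent : Fin kout

/-- Environment states record the adversary, the time, a queue for each incoming lane
and the set of departed agents. -/
structure EnvState (kin kout : ℕ) where
  adv : Adversary kin kout
  time : ℕ
  queue : Fin kin → List ℕ
  done : Set ℕ

/-- Local states: a memory state together with a sensor reading
(the minimal reading plus possibly extra sensor information). -/
abbrev LState (kin kout : ℕ) (Mem Extra : Type*) := Mem × Reading kin kout × Extra

/-- Global states: an environment state and local states for all agents. -/
abbrev GState (kin kout : ℕ) (Mem Extra : Type*) :=
  EnvState kin kout × (ℕ → LState kin kout Mem Extra)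

/-- A run. -/
abbrev Run (kin kout : ℕ) (Mem Extra : Type*) := ℕ → GState kin kout Mem Extra

/-- An action protocol maps each agent's local state to an action. -/
abbrev Prot (kin kout : ℕ) (Mem Extra : Type*) := ℕ → LState kin kout Mem Extra → Act

variable {kin kout : ℕ} {Mem Extra Msg : Type*}

/-- Agent `i` is at the front of some queue. -/
def isFront (e : EnvState kin kout) (i : ℕ) : Prop :=
  ∃ l : Fin kin, (e.queue l).head? = some i

/-- The (lane, position) of agent `i`, if it is in some queue. -/
def posAt (e : EnvState kin kout) (i : ℕ) : Option (Fin kin × ℕ) :=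
  if h : ∃ l : Fin kin, i ∈ e.queue l then some (h.choose, (e.queue h.choose).idxOf i)
  else none

/-- The intended departure lane of agent `i`, as given by the arrival schedule. -/
def intentOf (e : EnvState kin kout) (i : ℕ) : Fin kout := (e.adv.arrive i).2.2

/-- The move `(lane_i, intent_i)` of agent `i`, if it is in some queue. -/
def moveAt (e : EnvState kin kout) (i : ℕ) : Option (Move kin kout) :=
  (posAt e i).map (fun p => (p.1, intentOf e i))

/-- The minimal sensor reading of agent `i` in environment state `e`. -/
def minimalReading (e : EnvState kin kout) (i : ℕ) : Reading kin kout where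
  front := isFront e i
  lane :=
    if h : ∃ l : Fin kin, i ∈ e.queue l then LaneStatus.inLane h.choose
    else if i ∈ e.done then LaneStatus.finished else LaneStatus.notArrived
  intent := intentOf e i

/-- An information-exchange protocol: initial memories, extra sensor information,
a message function and a memory-update function. -/
structure IEP (kin kout : ℕ) (Mem Extra Msg : Type*) where
  initMem : ℕ → Mem
  extra : EnvState kin kout → ℕ → Extra
  msg : ℕ → LState kin kout Mem Extra → Act → Reading kin kout × Extra → Option Msg
  upd : ℕ → LState kin kout Mem Extra → Act → Set Msg → Mem

/-- One round of the system: agents act, queues are updated (dequeues for agents that go,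
enqueues for new arrivals), new sensor readings are taken, messages are broadcast and
received subject to the transmission environment and the failure functions, and memories
are updated. -/
def step (E : IEP kin kout Mem Extra Msg) (P : Prot kin kout Mem Extra)
    (g : GState kin kout Mem Extra) : GState kin kout Mem Extra :=
  let e := g.1
  let act : ℕ → Act := fun i => P i (g.2 i)
  let q' : Fin kin → List ℕ := fun l =>
    let q1 := match (e.queue l).head? with
      | some i => if act i = Act.go then (e.queue l).tail else e.queue l
      | none => e.queue l
    if h : ∃ i l', e.adv.arrive i = (e.time + 1, l, l') then q1 ++ [h.choose] else q1
  let done' : Set ℕ := e.done ∪ {i | isFront e i ∧ act i = Act.go}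
  let e' : EnvState kin kout := ⟨e.adv, e.time + 1, q', done'⟩
  let sens : ℕ → Reading kin kout × Extra := fun i => (minimalReading e' i, E.extra e' i)
  let rcv : ℕ → Set Msg := fun i =>
    if e.adv.Fr e.time i = true ∧ (posAt e' i).isSome = true then
      {m | ∃ j pj pi, E.msg j (g.2 j) (act j) (sens j) = some m ∧
            e.adv.Ft e.time j = true ∧
            posAt e' j = some pj ∧ posAt e' i = some pi ∧ (pj, pi) ∈ e.adv.T}
    else ∅
  (e', fun i => (E.upd i (g.2 i) (act i) (rcv i), sens i))

/-- An intersection context: an information-exchange protocol together with an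
adversary model. -/
structure Ctx (kin kout : ℕ) (Mem Extra Msg : Type*) where
  iep : IEP kin kout Mem Extra Msg
  adv : Set (Adversary kin kout)

/-- Initial global states: time 0, empty queues, no departed agents, an adversary
from the adversary model, and initial local states. -/
def Init (C : Ctx kin kout Mem Extra Msg) (g : GState kin kout Mem Extra) : Prop :=
  g.1.adv ∈ C.adv ∧ g.1.time = 0 ∧ (∀ l, g.1.queue l = []) ∧ g.1.done = ∅ ∧
  ∀ i, g.2 i = (C.iep.initMem i, minimalReading g.1 i, C.iep.extra g.1 i)

/-- The interpreted system `I_{γ,P}`: the set of runs of protocol `P` in context `γ`. -/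
def Runs (C : Ctx kin kout Mem Extra Msg) (P : Prot kin kout Mem Extra) :
    Set (Run kin kout Mem Extra) :=
  {r | Init C (r 0) ∧ ∀ m, r (m + 1) = step C.iep P (r m)}

/-- `front_i` holds at the point `(r,m)`. -/
def frontAt (r : Run kin kout Mem Extra) (m i : ℕ) : Prop := isFront (r m).1 i

/-- `going_i` abbreviates `front_i ∧ ◯¬front_i`. -/
def goingAt (r : Run kin kout Mem Extra) (m i : ℕ) : Prop :=
  frontAt r m i ∧ ¬ frontAt r (m + 1) i

/-- `GO(r,m)`: the set of agents that go through the intersection in round `m+1`. -/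
def GOs (r : Run kin kout Mem Extra) (m : ℕ) : Set ℕ := {i | goingAt r m i}

/-- Validity: an agent goes through the intersection only from the front of its queue. -/
def ValidityP (C : Ctx kin kout Mem Extra Msg) (P : Prot kin kout Mem Extra) : Prop :=
  ∀ r ∈ Runs C P, ∀ m i, goingAt r m i → frontAt r m i

/-- Safety: agents that go simultaneously have compatible moves. -/
def SafetyP (O : Move kin kout → Move kin kout → Prop)
    (C : Ctx kin kout Mem Extra Msg) (P : Prot kin kout Mem Extra) : Prop :=
  ∀ r ∈ Runs C P, ∀ m i j, i ≠ j → goingAt r m i → goingAt r m j →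
    ∀ mi mj, moveAt (r m).1 i = some mi → moveAt (r m).1 j = some mj → O mi mj

/-- Liveness: every agent at the front of a queue eventually goes. -/
def LivenessP (C : Ctx kin kout Mem Extra Msg) (P : Prot kin kout Mem Extra) : Prop :=
  ∀ r ∈ Runs C P, ∀ m i, frontAt r m i → ∃ m' ≥ m, goingAt r m' i

/-- An intersection protocol: an action protocol satisfying Validity, Safety and Liveness. -/
def IsIntersectionProtocol (O : Move kin kout → Move kin kout → Prop)
    (C : Ctx kin kout Mem Extra Msg) (P : Prot kin kout Mem Extra) : Prop :=
  ValidityP C P ∧ SafetyP O C P ∧ LivenessP C P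

/-- `safe-to-go_i` at `(r,m)`: `i` is at the front of its queue (position 0) and the moves
of the agents in `GO(r,m) ∪ {i}` are pairwise compatible. -/
def safeToGo (O : Move kin kout → Move kin kout → Prop)
    (r : Run kin kout Mem Extra) (m i : ℕ) : Prop :=
  (∃ p, posAt (r m).1 i = some p ∧ p.2 = 0) ∧
  ∀ j ∈ GOs r m ∪ {i}, ∀ k ∈ GOs r m ∪ {i}, j ≠ k →
    ∀ mj mk, moveAt (r m).1 j = some mj → moveAt (r m).1 k = some mk → O mj mk

/-- `P` has unnecessary waiting with respect to `γ`. -/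
def UnnecessaryWaiting (O : Move kin kout → Move kin kout → Prop)
    (C : Ctx kin kout Mem Extra Msg) (P : Prot kin kout Mem Extra) : Prop :=
  ∃ r ∈ Runs C P, ∃ m i, safeToGo O r m i ∧ i ∉ GOs r m

/-- The time at which agent `i` goes through the intersection in run `r` (∞ if never). -/
def gotime (r : Run kin kout Mem Extra) (i : ℕ) : ℕ∞ :=
  sInf {n : ℕ∞ | ∃ m : ℕ, goingAt r m i ∧ n = (m : ℕ∞)}

/-- `P` dominates `P'`: on all corresponding runs, every agent goes at least as early. -/
def Dominates (C : Ctx kin kout Mem Extra Msg) (P P' : Prot kin kout Mem Extra) : Prop :=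
  ∀ r ∈ Runs C P, ∀ r' ∈ Runs C P', r 0 = r' 0 → ∀ i, gotime r i ≤ gotime r' i

def StrictDominates (C : Ctx kin kout Mem Extra Msg) (P P' : Prot kin kout Mem Extra) : Prop :=
  Dominates C P P' ∧ ¬ Dominates C P' P

/-- `P` is optimal: no intersection protocol strictly dominates it. -/
def Optimal (O : Move kin kout → Move kin kout → Prop)
    (C : Ctx kin kout Mem Extra Msg) (P : Prot kin kout Mem Extra) : Prop :=
  ¬ ∃ P' : Prot kin kout Mem Extra,
      IsIntersectionProtocol O C P' ∧ StrictDominates C P' P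

/-- `P` lexicographically dominates `P'`. -/
def LexDominates (C : Ctx kin kout Mem Extra Msg) (P P' : Prot kin kout Mem Extra) : Prop :=
  ∀ r ∈ Runs C P, ∀ r' ∈ Runs C P', r 0 = r' 0 →
    (∀ m, GOs r m = GOs r' m) ∨
    ∃ m, (∀ k < m, GOs r k = GOs r' k) ∧ GOs r m ≠ GOs r' m ∧ GOs r' m ⊂ GOs r m

def StrictLexDominates (C : Ctx kin kout Mem Extra Msg) (P P' : Prot kin kout Mem Extra) :
    Prop :=
  LexDominates C P P' ∧ ¬ LexDominates C P' P

/-- `P` is lexicographically optimal: no intersection protocol strictly lexicographically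
dominates it. -/
def LexOptimal (O : Move kin kout → Move kin kout → Prop)
    (C : Ctx kin kout Mem Extra Msg) (P : Prot kin kout Mem Extra) : Prop :=
  ¬ ∃ P' : Prot kin kout Mem Extra,
      IsIntersectionProtocol O C P' ∧ StrictLexDominates C P' P

/-- Knowledge: `K_i φ` holds at `(r,m)` iff `φ` holds at all points of the system where
agent `i` has the same local state. -/
def Kn (S : Set (Run kin kout Mem Extra)) (i : ℕ)
    (φ : Run kin kout Mem Extra → ℕ → Prop) (r : Run kin kout Mem Extra) (m : ℕ) : Prop :=
  ∀ r' ∈ S, ∀ m', (r' m').2 i = (r m).2 i → φ r' m'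

/-- The adversary model has no failures. -/
def NoFailures (C : Ctx kin kout Mem Extra Msg) : Prop :=
  ∀ α ∈ C.adv, ∀ k i, α.Ft k i = true ∧ α.Fr k i = true

/-- Full information exchange: every agent broadcasts (an injective encoding of) its
entire local state in every round, and records every broadcast it receives. -/
def FullInfo (C : Ctx kin kout Mem Extra Msg) : Prop :=
  (∃ enc : LState kin kout Mem Extra → Msg, Function.Injective enc ∧
      ∀ i s a o, C.iep.msg i s a o = some (enc s)) ∧
  (∀ i s a, Function.Injective fun B : Set Msg => C.iep.upd i s a B)

/-- A sufficiently rich context: every agent that will be at the front of some lane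
broadcasts a message encoding its lane and intent, tagged as coming from the front;
no other message is tagged as a front message; and each agent records the
(lane, intent) pair of each front agent it hears from. -/
def SufficientlyRich (C : Ctx kin kout Mem Extra Msg) : Prop :=
  ∃ dec : Msg → Option (Move kin kout),
    (∀ i s a (o : Reading kin kout × Extra) (l : Fin kin),
        o.1.front → o.1.lane = LaneStatus.inLane l →
        ∃ msg, C.iep.msg i s a o = some msg ∧ dec msg = some (l, o.1.intent)) ∧
    (∀ i s a (o : Reading kin kout × Extra), ¬ o.1.front →
        ∀ msg, C.iep.msg i s a o = some msg → dec msg = none) ∧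
    (∃ rec : Mem → Set (Move kin kout),
        ∀ i s a B, rec (C.iep.upd i s a B) = {mv | ∃ msg ∈ B, dec msg = some mv})

/-- The set of agents at the front of a queue. -/
def FrontSet (e : EnvState kin kout) : Set ℕ := {i | isFront e i}

/-- `P` depends only on the agents at the front of their queues. -/
def DependsOnlyOnFront (C : Ctx kin kout Mem Extra Msg) (P : Prot kin kout Mem Extra) :
    Prop :=
  ∀ r ∈ Runs C P, ∀ r' ∈ Runs C P, ∀ m m' i,
    FrontSet (r m).1 = FrontSet (r' m').1 → P i ((r m).2 i) = P i ((r' m').2 i)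

/-- The choices of an adversary in a single round: arrivals, the transmission
environment and the failure values. -/
structure Choice (kin kout : ℕ) where
  arrivals : Set (ℕ × Fin kin × Fin kout)
  T : Set ((Fin kin × ℕ) × (Fin kin × ℕ))
  Ft : ℕ → Bool
  Fr : ℕ → Bool

/-- The choices of adversary `α` in round `m+1`. -/
def choiceAt (α : Adversary kin kout) (m : ℕ) : Choice kin kout where
  arrivals := {p | α.arrive p.1 = (m + 1, p.2.1, p.2.2)}
  T := α.T
  Ft := fun i => α.Ft m i
  Fr := fun i => α.Fr m i

/-- The adversary history `H(α,m) = ⟨α_0, …, α_{m-1}⟩`. -/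
def hist (α : Adversary kin kout) (m : ℕ) : List (Choice kin kout) :=
  (List.range m).map (choiceAt α)

/-- The adversary history of run `r` up to time `m`. -/
def histOf (r : Run kin kout Mem Extra) (m : ℕ) : List (Choice kin kout) :=
  hist (r 0).1.adv m

/-- An intersection policy: a map from adversary histories to sets of permitted moves. -/
abbrev Policy (kin kout : ℕ) := List (Choice kin kout) → Set (Move kin kout)

/-- The set `H_γ` of adversary histories of the context. -/
def Hists (C : Ctx kin kout Mem Extra Msg) : Set (List (Choice kin kout)) :=
  {h | ∃ α ∈ C.adv, ∃ m, h = hist α m}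

/-- A feasible infinite sequence of histories: one arising from a single adversary. -/
def Feasible (F : Set (Adversary kin kout)) (h : ℕ → List (Choice kin kout)) : Prop :=
  ∃ α ∈ F, ∀ m, h m = hist α m

/-- Conflict-freedom of an intersection policy. -/
def ConflictFree (O : Move kin kout → Move kin kout → Prop)
    (C : Ctx kin kout Mem Extra Msg) (σ : Policy kin kout) : Prop :=
  ∀ h ∈ Hists C, ∀ mv ∈ σ h, ∀ mv' ∈ σ h, mv ≠ mv' → O mv mv'

/-- Fairness of an intersection policy. -/
def FairPolicy (C : Ctx kin kout Mem Extra Msg) (σ : Policy kin kout) : Prop :=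
  ∀ h : ℕ → List (Choice kin kout), Feasible C.adv h →
    ∀ mv : Move kin kout, ∀ m, ∃ m' ≥ m, mv ∈ σ (h m')

/-- A correct intersection policy: conflict-free and fair. -/
def CorrectPolicy (O : Move kin kout → Move kin kout → Prop)
    (C : Ctx kin kout Mem Extra Msg) (σ : Policy kin kout) : Prop :=
  ConflictFree O C σ ∧ FairPolicy C σ

/-- A synchronous context: the time is encoded in each agent's local state. -/
def Synchronous (C : Ctx kin kout Mem Extra Msg) : Prop :=
  ∃ clock : LState kin kout Mem Extra → ℕ,
    ∀ P : Prot kin kout Mem Extra, ∀ r ∈ Runs C P, ∀ m i, clock ((r m).2 i) = m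

/-- The knowledge condition of the knowledge-based program `P^σ`:
`front_i ∧ (lane_i, intent_i) ∈ σ`. -/
def phiSigma (σ : Policy kin kout) (i : ℕ) (r : Run kin kout Mem Extra) (m : ℕ) : Prop :=
  frontAt r m i ∧ ∃ mv, moveAt (r m).1 i = some mv ∧ mv ∈ σ (histOf r m)

/-- `P` implements the knowledge-based program `if K_i φ_i then go else noop` in `γ`. -/
def Implements (C : Ctx kin kout Mem Extra Msg) (P : Prot kin kout Mem Extra)
    (φ : ℕ → Run kin kout Mem Extra → ℕ → Prop) : Prop :=
  ∀ r ∈ Runs C P, ∀ m i, (P i ((r m).2 i) = Act.go ↔ Kn (Runs C P) i (φ i) r m)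

/-- Behavioral equivalence: the protocols take the same actions at all reachable states. -/
def BehEq (C : Ctx kin kout Mem Extra Msg) (P P' : Prot kin kout Mem Extra) : Prop :=
  (∀ r ∈ Runs C P, ∀ m i, P i ((r m).2 i) = P' i ((r m).2 i)) ∧
  (∀ r ∈ Runs C P', ∀ m i, P i ((r m).2 i) = P' i ((r m).2 i))

/-- `γ` is `σ`-aware. -/
def SigmaAware (C : Ctx kin kout Mem Extra Msg) (σ : Policy kin kout) : Prop :=
  ∀ P : Prot kin kout Mem Extra, ∀ r ∈ Runs C P, ∀ m i (l : Fin kin) (l' : Fin kout),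
    (l, l') ∈ σ (histOf r m) → i ∈ (r m).1.queue l →
    Kn (Runs C P) i (fun r' m' => (l, l') ∈ σ (histOf r' m')) r m

/-- `γ` is `next`-aware. -/
def NextAware (C : Ctx kin kout Mem Extra Msg)
    (next : List (Choice kin kout) → Fin kin) : Prop :=
  ∀ P : Prot kin kout Mem Extra, ∀ r ∈ Runs C P, ∀ m i (l : Fin kin),
    next (histOf r m) = l →
    Kn (Runs C P) i (fun r' m' => next (histOf r' m') = l) r m

/-- Cyclic distance from `a` to `b` (mod `kin`). -/
def distC (a b : Fin kin) : ℕ := (b.val + kin - a.val) % kin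

/-- `l` lies in the cyclic interval `[a, b)` of incoming lanes. -/
def inCyc (a b l : Fin kin) : Prop := distC a l < distC a b

/-- `mv` is compatible with every move in `S`. -/
def compatAll (O : Move kin kout → Move kin kout → Prop)
    (S : Set (Move kin kout)) (mv : Move kin kout) : Prop :=
  ∀ mv' ∈ S, O mv mv'

/-- The proposition `V_i` of the knowledge-based program `𝐏`. -/
def Vprop (O : Move kin kout → Move kin kout → Prop) (σ : Policy kin kout)
    (next : List (Choice kin kout) → Fin kin) (i : ℕ)
    (r : Run kin kout Mem Extra) (m : ℕ) : Prop :=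
  ∃ mv, moveAt (r m).1 i = some mv ∧ mv ∉ σ (histOf r m) ∧
    (∀ j mj, goingAt r m j → moveAt (r m).1 j = some mj →
        mj ∈ σ (histOf r m) → O mv mj) ∧
    (∀ j mj, j ≠ i → goingAt r m j → moveAt (r m).1 j = some mj →
        mj ∉ σ (histOf r m) → inCyc (next (histOf r m)) mv.1 mj.1 → O mv mj)

/-- The knowledge condition of the knowledge-based program `𝐏`:
`front_i ∧ ((lane_i, intent_i) ∈ σ ∨ V_i)`. -/
def phiP (O : Move kin kout → Move kin kout → Prop) (σ : Policy kin kout)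
    (next : List (Choice kin kout) → Fin kin) (i : ℕ)
    (r : Run kin kout Mem Extra) (m : ℕ) : Prop :=
  frontAt r m i ∧
    ((∃ mv, moveAt (r m).1 i = some mv ∧ mv ∈ σ (histOf r m)) ∨ Vprop O σ next i r m)

/-- Fairness of a `next` function. -/
def FairNext (C : Ctx kin kout Mem Extra Msg)
    (next : List (Choice kin kout) → Fin kin) : Prop :=
  ∀ h : ℕ → List (Choice kin kout), Feasible C.adv h →
    ∀ m (l : Fin kin), ∃ m' ≥ m, next (h m') = l

/-- Fairness of a pair `(σ, next)`. -/
def PairFair (O : Move kin kout → Move kin kout → Prop)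
    (C : Ctx kin kout Mem Extra Msg) (σ : Policy kin kout)
    (next : List (Choice kin kout) → Fin kin) : Prop :=
  ∀ h : ℕ → List (Choice kin kout), Feasible C.adv h →
    ∀ m (mv : Move kin kout), ∃ m' ≥ m,
      mv ∈ σ (h m') ∨ (next (h m') = mv.1 ∧ compatAll O (σ (h m')) mv)

/-- `next(h) = |h| mod |L_in|` at time `t`. -/
def nextL (hkin : 0 < kin) (t : ℕ) : Fin kin := ⟨t % kin, Nat.mod_lt _ hkin⟩

/-- The stages of the construction of the set `Pos_i`, starting from the lane `nxt` and
proceeding in cyclic order; `M` is the set of moves received from front agents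
(empty when there is no communication). -/
def posStage (hkin : 0 < kin) (O : Move kin kout → Move kin kout → Prop)
    (M : Set (Move kin kout)) (nxt : Fin kin) : ℕ → Set (Move kin kout)
  | 0 => ∅
  | t + 1 =>
    let S := posStage hkin O M nxt t
    let l : Fin kin := ⟨(nxt.val + t) % kin, Nat.mod_lt _ hkin⟩
    if ∃ l' : Fin kout, (l, l') ∈ M then
      S ∪ {mv | mv.1 = l ∧ mv ∈ M ∧ compatAll O S mv}
    else
      S ∪ {mv | mv.1 = l ∧ compatAll O S mv}

/-- The set `Pos_i` computed from the received moves `M`, the lane `nxt = next` and the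
agent's own lane `lanei`. -/
def PosSet (hkin : 0 < kin) (O : Move kin kout → Move kin kout → Prop)
    (M : Set (Move kin kout)) (nxt lanei : Fin kin) : Set (Move kin kout) :=
  posStage hkin O M nxt (distC nxt lanei)

/-- The stage `Pos_i^l` of the construction of `Pos_i`, for a lane `l` in the cyclic
interval `[nxt, lane_i)`. -/
def PosUpTo (hkin : 0 < kin) (O : Move kin kout → Move kin kout → Prop)
    (M : Set (Move kin kout)) (nxt l : Fin kin) : Set (Move kin kout) :=
  posStage hkin O M nxt (distC nxt l + 1)

/-- The adversary model with no failures. -/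
def NFadv (kin kout : ℕ) : Set (Adversary kin kout) :=
  {α | ∀ k i, α.Ft k i = true ∧ α.Fr k i = true}

/-- The adversary model with crash failures. -/
def CRadv (kin kout : ℕ) : Set (Adversary kin kout) :=
  {α | (∀ k i, α.Fr k i = true) ∧
    ∀ k i, α.Ft k i = false → ∀ k', k < k' → α.Ft k' i = false}

/-- The adversary model with sending omissions. -/
def SOadv (kin kout : ℕ) : Set (Adversary kin kout) :=
  {α | ∀ k i, α.Fr k i = true}

/-- The information-exchange protocol of `γ_∅`: a single memory state, no messages,
and sensor readings `⟨front_i, lane_i, intent_i, time_i⟩`. -/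
def E0 (kin kout : ℕ) : IEP kin kout Unit ℕ Empty where
  initMem _ := ()
  extra e _ := e.time
  msg _ _ _ _ := none
  upd _ _ _ _ := ()

/-- The context `γ_∅(F)`. -/
def gammaEmpty (kin kout : ℕ) (F : Set (Adversary kin kout)) : Ctx kin kout Unit ℕ Empty :=
  ⟨E0 kin kout, F⟩

/-- The protocol `P^∅`: go iff at the front and own move compatible with `Pos_i`. -/
def Pempty (hkin : 0 < kin) (O : Move kin kout → Move kin kout → Prop) :
    Prot kin kout Unit ℕ := fun _ s =>
  match s.2.1.lane with
  | LaneStatus.inLane l =>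
      if s.2.1.front ∧ compatAll O (PosSet hkin O ∅ (nextL hkin s.2.2) l) (l, s.2.1.intent)
      then Act.go else Act.noop
  | _ => Act.noop

/-- The information-exchange protocol of `γ_intent`: exactly the agents at the front of a
lane broadcast `(lane_i, intent_i)`; the memory is the set of moves received in the
current round; sensor readings are `⟨front_i, lane_i, intent_i, time_i⟩`. -/
def Eintent (kin kout : ℕ) : IEP kin kout (Set (Move kin kout)) ℕ (Move kin kout) where
  initMem _ := ∅
  extra e _ := e.time
  msg _ _ _ o :=
    if o.1.front then
      match o.1.lane with
      | LaneStatus.inLane l => some (l, o.1.intent)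
      | _ => none
    else none
  upd _ _ _ B := B

/-- The context `γ_intent(F)`. -/
def gammaIntent (kin kout : ℕ) (F : Set (Adversary kin kout)) :
    Ctx kin kout (Set (Move kin kout)) ℕ (Move kin kout) :=
  ⟨Eintent kin kout, F⟩

/-- The protocol `P^intent`: go iff at the front and own move compatible with `Pos_i`
computed from the received moves. -/
def Pintent (hkin : 0 < kin) (O : Move kin kout → Move kin kout → Prop) :
    Prot kin kout (Set (Move kin kout)) ℕ := fun _ s =>
  match s.2.1.lane with
  | LaneStatus.inLane l =>
      if s.2.1.front ∧
          compatAll O (PosSet hkin O s.1 (nextL hkin s.2.2) l) (l, s.2.1.intent)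
      then Act.go else Act.noop
  | _ => Act.noop

end Inter

open Inter
namespace InterAux
open Inter

variable {kin kout : ℕ}

lemma reading_ext {a b : Reading kin kout} (h1 : a.front ↔ b.front)
    (h2 : a.lane = b.lane) (h3 : a.intent = b.intent) : a = b := by
  cases a; cases b; simp_all [propext h1]

lemma hist_length (α : Adversary kin kout) (m : ℕ) : (hist α m).length = m := by
  simp [hist]

lemma gamma_iep (F : Set (Adversary kin kout)) :
    (gammaEmpty kin kout F).iep = E0 kin kout := rfl

lemma step_time (P : Prot kin kout Unit ℕ) (g : GState kin kout Unit ℕ) :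
    (step (E0 kin kout) P g).1.time = g.1.time + 1 := rfl

lemma step_local (P : Prot kin kout Unit ℕ) (g : GState kin kout Unit ℕ) (i : ℕ) :
    (step (E0 kin kout) P g).2 i =
      ((), minimalReading (step (E0 kin kout) P g).1 i, g.1.time + 1) := rfl

lemma run_basic {F : Set (Adversary kin kout)} {P : Prot kin kout Unit ℕ}
    {r : Run kin kout Unit ℕ} (hr : r ∈ Runs (gammaEmpty kin kout F) P) (m : ℕ) :
    (r m).1.time = m ∧ ∀ i, (r m).2 i = ((), minimalReading (r m).1 i, m) := by
  induction m with
  | zero =>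
    obtain ⟨⟨_, ht, _, _, hloc⟩, _⟩ := hr
    refine ⟨ht, fun i => ?_⟩
    rw [hloc i]
    simp [gammaEmpty, E0, ht]
  | succ m ih =>
    have hs := hr.2 m
    refine ⟨by rw [hs, gamma_iep, step_time, ih.1], fun i => ?_⟩
    rw [hs, gamma_iep, step_local, ih.1]


lemma distC_lt (hkin : 0 < kin) (a b : Fin kin) : distC a b < kin :=
  Nat.mod_lt _ hkin

lemma add_distC (a b : Fin kin) : (a.val + distC a b) % kin = b.val := by
  have ha := a.isLt; have hb := b.isLt
  unfold distC
  rw [Nat.add_mod, Nat.mod_mod_of_dvd, ← Nat.add_mod]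
  · have : a.val + (b.val + kin - a.val) = b.val + kin := by omega
    rw [this, Nat.add_mod_right, Nat.mod_eq_of_lt hb]
  · exact dvd_refl kin

lemma distC_self_add (hkin : 0 < kin) (a : Fin kin) (t : ℕ) (ht : t < kin) :
    distC a ⟨(a.val + t) % kin, Nat.mod_lt _ hkin⟩ = t := by
  have ha := a.isLt
  unfold distC
  simp only
  have h1 : ((a.val + t) % kin + kin - a.val) = ((a.val + t) % kin + (kin - a.val)) := by omega
  rw [h1, Nat.add_mod, Nat.mod_mod_of_dvd _ (dvd_refl kin), ← Nat.add_mod]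
  have : a.val + t + (kin - a.val) = t + kin := by omega
  rw [this, Nat.add_mod_right, Nat.mod_eq_of_lt ht]

lemma posStage_mono (hkin : 0 < kin) (O : Move kin kout → Move kin kout → Prop)
    (M : Set (Move kin kout)) (nxt : Fin kin) {t t' : ℕ} (h : t ≤ t') :
    posStage hkin O M nxt t ⊆ posStage hkin O M nxt t' := by
  induction t' with
  | zero => simp_all
  | succ t' ih =>
    rcases Nat.eq_or_lt_of_le h with h' | h'
    · rw [h']
    · refine (ih (by omega)).trans ?_
      rw [posStage]
      split <;> exact Set.subset_union_left

lemma posStage_intro (hkin : 0 < kin) (O : Move kin kout → Move kin kout → Prop)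
    (nxt : Fin kin) (t : ℕ) (mv : Move kin kout)
    (h1 : mv.1 = ⟨(nxt.val + t) % kin, Nat.mod_lt _ hkin⟩)
    (h2 : compatAll O (posStage hkin O ∅ nxt t) mv) :
    mv ∈ posStage hkin O ∅ nxt (t + 1) := by
  rw [posStage]
  have : ¬ ∃ l' : Fin kout, ((⟨(nxt.val + t) % kin, Nat.mod_lt _ hkin⟩ : Fin kin), l') ∈
      (∅ : Set (Move kin kout)) := by simp
  rw [if_neg this]
  exact Or.inr ⟨h1, h2⟩

lemma posStage_extract (hkin : 0 < kin) (O : Move kin kout → Move kin kout → Prop)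
    (nxt : Fin kin) {t : ℕ} (ht : t ≤ kin) {mv : Move kin kout}
    (h : mv ∈ posStage hkin O ∅ nxt t) :
    distC nxt mv.1 < t ∧ compatAll O (posStage hkin O ∅ nxt (distC nxt mv.1)) mv := by
  induction t with
  | zero => simp [posStage] at h
  | succ t ih =>
    rw [posStage] at h
    have hne : ¬ ∃ l' : Fin kout, ((⟨(nxt.val + t) % kin, Nat.mod_lt _ hkin⟩ : Fin kin), l') ∈
        (∅ : Set (Move kin kout)) := by simp
    rw [if_neg hne] at h
    rcases h with h | ⟨h1, h2⟩
    · have := ih (by omega) h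
      exact ⟨by omega, this.2⟩
    · have hd : distC nxt mv.1 = t := by
        rw [h1]; exact distC_self_add hkin nxt t (by omega)
      exact ⟨by omega, by rw [hd]; exact h2⟩


lemma reading_front (e : EnvState kin kout) (i : ℕ) :
    (minimalReading e i).front = isFront e i := rfl

lemma reading_intent (e : EnvState kin kout) (i : ℕ) :
    (minimalReading e i).intent = intentOf e i := rfl

lemma lane_of_mem {e : EnvState kin kout} {i : ℕ} (h : ∃ l : Fin kin, i ∈ e.queue l) :
    (minimalReading e i).lane = LaneStatus.inLane h.choose := by
  simp [minimalReading, h]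

lemma front_exists_mem {e : EnvState kin kout} {i : ℕ} (h : isFront e i) :
    ∃ l : Fin kin, i ∈ e.queue l := by
  obtain ⟨l, hl⟩ := h
  exact ⟨l, List.mem_of_mem_head? (by rw [hl]; simp)⟩

lemma moveAt_of_lane {e : EnvState kin kout} {i : ℕ} {l : Fin kin}
    (h : (minimalReading e i).lane = LaneStatus.inLane l) :
    moveAt e i = some (l, intentOf e i) ∧ i ∈ e.queue l := by
  have hex : ∃ l : Fin kin, i ∈ e.queue l := by
    by_contra hc
    simp [minimalReading, hc] at h
    split at h <;> simp_all
  have hc : hex.choose = l := by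
    have := lane_of_mem hex
    rw [h] at this
    injection this.symm
  refine ⟨?_, by rw [← hc]; exact hex.choose_spec⟩
  simp [moveAt, posAt, hex, hc]


lemma pempty_go_iff (hkin : 0 < kin) (O : Move kin kout → Move kin kout → Prop)
    (rd : Reading kin kout) (m i : ℕ) :
    Pempty hkin O i ((), rd, m) = Act.go ↔
      ∃ l : Fin kin, rd.lane = LaneStatus.inLane l ∧ rd.front ∧
        compatAll O (PosSet hkin O ∅ (nextL hkin m) l) (l, rd.intent) := by
  obtain ⟨fr, la, it⟩ := rd
  cases la with
  | inLane l =>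
    simp only [Pempty]
    split_ifs with h
    · exact iff_of_true rfl ⟨l, rfl, h.1, h.2⟩
    · constructor
      · intro hg; exact absurd hg (by simp)
      · rintro ⟨l', hl', hfr, hc⟩
        injection hl' with hll
        subst hll
        exact absurd ⟨hfr, hc⟩ h
  | notArrived => simp [Pempty]
  | finished => simp [Pempty]

lemma step_adv (P : Prot kin kout Unit ℕ) (g : GState kin kout Unit ℕ) :
    (step (E0 kin kout) P g).1.adv = g.1.adv := rfl

lemma step_queue (P : Prot kin kout Unit ℕ) (g : GState kin kout Unit ℕ) (l : Fin kin) :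
    (step (E0 kin kout) P g).1.queue l =
      (if h : ∃ i l', g.1.adv.arrive i = (g.1.time + 1, l, l') then
        (match (g.1.queue l).head? with
          | some i => if P i (g.2 i) = Act.go then (g.1.queue l).tail else g.1.queue l
          | none => g.1.queue l) ++ [h.choose]
      else
        match (g.1.queue l).head? with
          | some i => if P i (g.2 i) = Act.go then (g.1.queue l).tail else g.1.queue l
          | none => g.1.queue l) := rfl

lemma front_persist {F : Set (Adversary kin kout)} {P : Prot kin kout Unit ℕ}
    {r : Run kin kout Unit ℕ} (hr : r ∈ Runs (gammaEmpty kin kout F) P) {m j : ℕ}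
    (hf : frontAt r m j) (hn : P j ((r m).2 j) ≠ Act.go) : frontAt r (m + 1) j := by
  obtain ⟨l, hl⟩ := hf
  refine ⟨l, ?_⟩
  rw [hr.2 m, gamma_iep, step_queue]
  obtain ⟨t, hq⟩ : ∃ t, (r m).1.queue l = j :: t := by
    cases hq : (r m).1.queue l with
    | nil => rw [hq] at hl; simp at hl
    | cons a t => rw [hq] at hl; simp at hl; exact ⟨t, by rw [hl]⟩
  rw [hq]
  simp only [List.head?_cons, if_neg hn]
  split <;> simp

lemma going_go {F : Set (Adversary kin kout)} {P : Prot kin kout Unit ℕ}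
    {r : Run kin kout Unit ℕ} (hr : r ∈ Runs (gammaEmpty kin kout F) P) {m j : ℕ}
    (hg : goingAt r m j) : P j ((r m).2 j) = Act.go := by
  by_contra hn
  exact hg.2 (front_persist hr hg.1 hn)


lemma run_adv {F : Set (Adversary kin kout)} {P : Prot kin kout Unit ℕ}
    {r : Run kin kout Unit ℕ} (hr : r ∈ Runs (gammaEmpty kin kout F) P) (m : ℕ) :
    (r m).1.adv = (r 0).1.adv := by
  induction m with
  | zero => rfl
  | succ m ih => rw [hr.2 m, gamma_iep, step_adv, ih]

def advC (m i : ℕ) (l : Fin kin) (io : Fin kout) (mv' : Move kin kout)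
    (hlne : mv'.1 ≠ l) : Adversary kin kout where
  arrive n := if n = i then (m, l, io) else if n = i + 1 then (m, mv'.1, mv'.2)
    else (m + n + 2, l, io)
  conflictFree := by
    intro a b hab heq
    by_cases ha : a = i <;> by_cases ha' : a = i + 1 <;>
      by_cases hb : b = i <;> by_cases hb' : b = i + 1 <;>
      simp only [ha, ha', hb, hb', Nat.succ_ne_self, if_pos, if_neg, if_true, if_false, reduceIte, ite_false] at heq ⊢ <;>
      first
        | omega
        | exact absurd heq (by omega)
        | (exact fun hc => hlne (by rw [hc]))
        | (exact fun hc => hlne (by rw [← hc]))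
  T := Set.univ
  T_front := fun _ _ => Set.mem_univ _
  Ft := fun _ _ => true
  Fr := fun _ _ => true

lemma advC_mem {F : Set (Adversary kin kout)}
    (hF : F = NFadv kin kout ∨ F = CRadv kin kout ∨ F = SOadv kin kout)
    (m i : ℕ) (l : Fin kin) (io : Fin kout) (mv' : Move kin kout)
    (hlne : mv'.1 ≠ l) : advC m i l io mv' hlne ∈ F := by
  rcases hF with h | h | h <;> subst h
  · exact fun k j => ⟨rfl, rfl⟩
  · exact ⟨fun k j => rfl, fun k j h => by simp [advC] at h⟩
  · exact fun k j => rfl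


lemma histOf_len {Mem Extra : Type*} (r : Run kin kout Mem Extra) (m : ℕ) :
    (histOf r m).length = m := hist_length _ m

lemma phi_holds (hkin : 0 < kin) (O : Move kin kout → Move kin kout → Prop)
    {F : Set (Adversary kin kout)} {r : Run kin kout Unit ℕ}
    (hr : r ∈ Runs (gammaEmpty kin kout F) (Pempty hkin O)) (m i : ℕ)
    (hgo : Pempty hkin O i ((r m).2 i) = Act.go) :
    phiP O (fun _ => (∅ : Set (Move kin kout)))
      (fun h => nextL hkin h.length) i r m := by
  rw [(run_basic hr m).2 i, pempty_go_iff] at hgo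
  obtain ⟨l, hl, hfr, hcomp⟩ := hgo
  have hmv := (moveAt_of_lane hl).1
  have hfr' : frontAt r m i := hfr
  refine ⟨hfr', Or.inr ⟨(l, intentOf (r m).1 i), hmv, Set.notMem_empty _,
    fun j mj _ _ hmem => absurd hmem (Set.notMem_empty _), ?_⟩⟩
  intro j mj hji hgoing hmvj _ hcyc
  -- j's action is go
  have hgj := going_go hr hgoing
  rw [(run_basic hr m).2 j, pempty_go_iff] at hgj
  obtain ⟨lj, hlj, _, hcompj⟩ := hgj
  have hmvj' := (moveAt_of_lane hlj).1
  rw [hmvj'] at hmvj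
  injection hmvj with hmj
  subst hmj
  -- mj in PosSet up to l
  have hcyc' : distC (nextL hkin m) lj < distC (nextL hkin m) l := by
    simpa [inCyc, histOf_len] using hcyc
  have hmem1 : (lj, intentOf (r m).1 j) ∈
      posStage hkin O ∅ (nextL hkin m) (distC (nextL hkin m) lj + 1) := by
    refine posStage_intro hkin O (nextL hkin m) (distC (nextL hkin m) lj) _ ?_ ?_
    · exact (Fin.ext (add_distC (nextL hkin m) lj)).symm
    · exact hcompj
  have hmem2 : (lj, intentOf (r m).1 j) ∈ PosSet hkin O ∅ (nextL hkin m) l :=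
    posStage_mono hkin O ∅ (nextL hkin m) (by omega) hmem1
  exact hcomp _ hmem2


lemma advC_arr_i (m i : ℕ) (l : Fin kin) (io : Fin kout) (mv' : Move kin kout)
    (hlne : mv'.1 ≠ l) : (advC m i l io mv' hlne).arrive i = (m, l, io) := by
  simp [advC]

lemma advC_arr_j (m i : ℕ) (l : Fin kin) (io : Fin kout) (mv' : Move kin kout)
    (hlne : mv'.1 ≠ l) : (advC m i l io mv' hlne).arrive (i + 1) = (m, mv'.1, mv'.2) := by
  simp [advC]

lemma advC_arr_o (m i : ℕ) (l : Fin kin) (io : Fin kout) (mv' : Move kin kout)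
    (hlne : mv'.1 ≠ l) (n : ℕ) (h1 : n ≠ i) (h2 : n ≠ i + 1) :
    (advC m i l io mv' hlne).arrive n = (m + n + 2, l, io) := by
  simp [advC, h1, h2]

lemma counterexample (hkin : 0 < kin) (O : Move kin kout → Move kin kout → Prop)
    {F : Set (Adversary kin kout)}
    (hF : F = NFadv kin kout ∨ F = CRadv kin kout ∨ F = SOadv kin kout)
    (m i : ℕ) (hm : 1 ≤ m) (l : Fin kin) (io : Fin kout) (mv' : Move kin kout)
    (hmem : mv' ∈ PosSet hkin O ∅ (nextL hkin m) l)
    (hno : ¬ O (l, io) mv') :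
    ∃ r' ∈ Runs (gammaEmpty kin kout F) (Pempty hkin O),
      isFront (r' m).1 i ∧
      (minimalReading (r' m).1 i).lane = LaneStatus.inLane l ∧
      (minimalReading (r' m).1 i).intent = io ∧
      ¬ phiP O (fun _ => (∅ : Set (Move kin kout)))
        (fun h => nextL hkin h.length) i r' m := by
  obtain ⟨hdist, hcam⟩ :=
    posStage_extract hkin O (nextL hkin m) (le_of_lt (distC_lt hkin _ l)) hmem
  have hlne : mv'.1 ≠ l := fun h => absurd hdist (by rw [h]; omega)
  set α := advC m i l io mv' hlne with hαdef
  set r' : Run kin kout Unit ℕ := fun k =>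
    (step (E0 kin kout) (Pempty hkin O))^[k]
      (⟨α, 0, fun _ => [], ∅⟩,
        fun n => ((), minimalReading ⟨α, 0, fun _ => [], ∅⟩ n, 0)) with hr'def
  have hstep : ∀ k, r' (k + 1) = step (E0 kin kout) (Pempty hkin O) (r' k) :=
    fun k => Function.iterate_succ_apply' _ _ _
  have hr' : r' ∈ Runs (gammaEmpty kin kout F) (Pempty hkin O) :=
    ⟨⟨advC_mem hF m i l io mv' hlne, rfl, fun _ => rfl, rfl, fun n => rfl⟩, hstep⟩
  have htime : ∀ k, (r' k).1.time = k := fun k => (run_basic hr' k).1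
  have hadv : ∀ k, (r' k).1.adv = α := fun k => run_adv hr' k
  -- no queue before time m
  have hempty : ∀ k, k < m → ∀ l'', (r' k).1.queue l'' = [] := by
    intro k
    induction k with
    | zero => intro _ l''; rfl
    | succ k ih =>
      intro hk l''
      rw [hstep k, step_queue]
      have hnoarr : ¬ ∃ n l', (r' k).1.adv.arrive n = ((r' k).1.time + 1, l'', l') := by
        rw [hadv, htime]
        rintro ⟨n, l', hn⟩
        by_cases hni : n = i
        · subst hni; rw [advC_arr_i] at hn
          simp only [Prod.ext_iff] at hn; omega
        · by_cases hnj : n = i + 1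
          · subst hnj; rw [advC_arr_j] at hn
            simp only [Prod.ext_iff] at hn; omega
          · rw [advC_arr_o m i l io mv' hlne n hni hnj] at hn
            simp only [Prod.ext_iff] at hn; omega
      rw [dif_neg hnoarr, ih (by omega) l'']
      rfl
  -- queues at time m
  have hm' : m - 1 + 1 = m := by omega
  have hstepm : r' m = step (E0 kin kout) (Pempty hkin O) (r' (m - 1)) := by
    conv_lhs => rw [← hm']
    exact hstep (m - 1)
  have hql : (r' m).1.queue l = [i] := by
    rw [hstepm, step_queue]
    have harr : ∃ n l', (r' (m-1)).1.adv.arrive n = ((r' (m-1)).1.time + 1, l, l') := by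
      refine ⟨i, io, ?_⟩
      rw [hadv, htime, advC_arr_i, hm']
    rw [dif_pos harr, hempty (m-1) (by omega) l]
    have huniq : ∀ n (l' : Fin kout),
        (r' (m-1)).1.adv.arrive n = ((r' (m-1)).1.time + 1, l, l') → n = i := by
      intro n l' hn
      rw [hadv, htime, hm'] at hn
      by_cases hci : n = i
      · exact hci
      · by_cases hcj : n = i + 1
        · rw [hcj, advC_arr_j] at hn
          simp only [Prod.ext_iff] at hn
          exact absurd hn.2.1 hlne
        · rw [advC_arr_o m i l io mv' hlne _ hci hcj] at hn
          simp only [Prod.ext_iff] at hn; omega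
    have hch : harr.choose = i := by
      obtain ⟨l', hcs⟩ := harr.choose_spec
      exact huniq _ l' hcs
    rw [hch]
    rfl
  have hqj : (r' m).1.queue mv'.1 = [i + 1] := by
    rw [hstepm, step_queue]
    have harr : ∃ n l', (r' (m-1)).1.adv.arrive n = ((r' (m-1)).1.time + 1, mv'.1, l') := by
      refine ⟨i + 1, mv'.2, ?_⟩
      rw [hadv, htime, advC_arr_j, hm']
    rw [dif_pos harr, hempty (m-1) (by omega) mv'.1]
    have huniq : ∀ n (l' : Fin kout),
        (r' (m-1)).1.adv.arrive n = ((r' (m-1)).1.time + 1, mv'.1, l') → n = i + 1 := by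
      intro n l' hn
      rw [hadv, htime, hm'] at hn
      by_cases hcj : n = i + 1
      · exact hcj
      · by_cases hci : n = i
        · rw [hci, advC_arr_i] at hn
          simp only [Prod.ext_iff] at hn
          exact absurd hn.2.1.symm hlne
        · rw [advC_arr_o m i l io mv' hlne _ hci hcj] at hn
          simp only [Prod.ext_iff] at hn; omega
    have hch : harr.choose = i + 1 := by
      obtain ⟨l', hcs⟩ := harr.choose_spec
      exact huniq _ l' hcs
    rw [hch]
    rfl
  have hqo : ∀ l'', l'' ≠ l → l'' ≠ mv'.1 → (r' m).1.queue l'' = [] := by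
    intro l'' h1 h2
    rw [hstepm, step_queue]
    have hnoarr : ¬ ∃ n l', (r' (m-1)).1.adv.arrive n = ((r' (m-1)).1.time + 1, l'', l') := by
      rw [hadv, htime, hm']
      rintro ⟨n, l', hn⟩
      by_cases hni : n = i
      · subst hni; rw [advC_arr_i] at hn
        simp only [Prod.ext_iff] at hn
        exact h1 hn.2.1.symm
      · by_cases hnj : n = i + 1
        · subst hnj; rw [advC_arr_j] at hn
          simp only [Prod.ext_iff] at hn
          exact h2 hn.2.1.symm
        · rw [advC_arr_o m i l io mv' hlne n hni hnj] at hn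
          simp only [Prod.ext_iff] at hn; omega
    rw [dif_neg hnoarr, hempty (m-1) (by omega) l'']
    rfl
  -- readings of i at time m
  have hfi : isFront (r' m).1 i := ⟨l, by rw [hql]; rfl⟩
  have hexi : ∃ l'', i ∈ (r' m).1.queue l'' := ⟨l, by rw [hql]; simp⟩
  have hmemi : ∀ l'', i ∈ (r' m).1.queue l'' → l'' = l := by
    intro l'' h
    by_cases h1 : l'' = l
    · exact h1
    · by_cases h2 : l'' = mv'.1
      · rw [h2, hqj] at h; simp at h
      · rw [hqo l'' h1 h2] at h; simp at h
  have hlanei : (minimalReading (r' m).1 i).lane = LaneStatus.inLane l := by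
    rw [lane_of_mem hexi, hmemi _ hexi.choose_spec]
  have hinti : (minimalReading (r' m).1 i).intent = io := by
    show intentOf (r' m).1 i = io
    unfold intentOf
    rw [hadv, advC_arr_i]
  -- readings of j = i+1 at time m
  have hfj : isFront (r' m).1 (i + 1) := ⟨mv'.1, by rw [hqj]; rfl⟩
  have hexj : ∃ l'', (i + 1) ∈ (r' m).1.queue l'' := ⟨mv'.1, by rw [hqj]; simp⟩
  have hmemj : ∀ l'', (i + 1) ∈ (r' m).1.queue l'' → l'' = mv'.1 := by
    intro l'' h
    by_cases h2 : l'' = mv'.1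
    · exact h2
    · by_cases h1 : l'' = l
      · rw [h1, hql] at h; simp at h
      · rw [hqo l'' h1 h2] at h; simp at h
  have hlanej : (minimalReading (r' m).1 (i + 1)).lane = LaneStatus.inLane mv'.1 := by
    rw [lane_of_mem hexj, hmemj _ hexj.choose_spec]
  have hintj : (minimalReading (r' m).1 (i + 1)).intent = mv'.2 := by
    show intentOf (r' m).1 (i + 1) = mv'.2
    unfold intentOf
    rw [hadv, advC_arr_j]
  -- agent i+1 goes at time m
  have hgoj : Pempty hkin O (i + 1) ((r' m).2 (i + 1)) = Act.go := by
    rw [(run_basic hr' m).2 (i + 1), pempty_go_iff]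
    refine ⟨mv'.1, hlanej, hfj, ?_⟩
    rw [hintj]
    exact hcam
  -- no arrivals at time m+1
  have hnoarr1 : ∀ l'', ¬ ∃ n l', (r' m).1.adv.arrive n = ((r' m).1.time + 1, l'', l') := by
    intro l''
    rw [hadv, htime]
    rintro ⟨n, l', hn⟩
    by_cases hni : n = i
    · subst hni; rw [advC_arr_i] at hn
      simp only [Prod.ext_iff] at hn; omega
    · by_cases hnj : n = i + 1
      · subst hnj; rw [advC_arr_j] at hn
        simp only [Prod.ext_iff] at hn; omega
      · rw [advC_arr_o m i l io mv' hlne n hni hnj] at hn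
        simp only [Prod.ext_iff] at hn; omega
  -- agent i+1 is not at the front at time m+1
  have hnf : ¬ isFront (r' (m + 1)).1 (i + 1) := by
    rintro ⟨l'', hh⟩
    rw [hstep m, step_queue, dif_neg (hnoarr1 l'')] at hh
    by_cases h1 : l'' = mv'.1
    · rw [h1, hqj] at hh
      simp only [List.head?_cons] at hh
      rw [if_pos hgoj] at hh
      simp at hh
    · by_cases h2 : l'' = l
      · rw [h2, hql] at hh
        simp only [List.head?_cons] at hh
        split at hh <;> simp at hh <;> omega
      · rw [hqo l'' h2 h1] at hh
        simp at hh
  have hgoingj : goingAt r' m (i + 1) := ⟨⟨mv'.1, by rw [hqj]; rfl⟩, hnf⟩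
  have hmvj : moveAt (r' m).1 (i + 1) = some mv' := by
    rw [(moveAt_of_lane hlanej).1]
    have : intentOf (r' m).1 (i + 1) = mv'.2 := hintj
    rw [this]
  have hmvi : moveAt (r' m).1 i = some (l, io) := by
    rw [(moveAt_of_lane hlanei).1]
    have : intentOf (r' m).1 i = io := hinti
    rw [this]
  -- conclusion
  refine ⟨r', hr', hfi, hlanei, hinti, ?_⟩
  rintro ⟨hfr, hor⟩
  rcases hor with ⟨mv, _, hmvmem⟩ | ⟨mv, hmvAt, _, _, h4⟩
  · exact Set.notMem_empty mv hmvmem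
  · rw [hmvi] at hmvAt
    injection hmvAt with hmveq
    subst hmveq
    refine hno (h4 (i + 1) mv' (by omega) hgoingj hmvj (Set.notMem_empty _) ?_)
    simpa [inCyc, histOf_len] using hdist

end InterAux

/-- `P^∅` implements the knowledge-based program `𝐏` (instantiated with
`next(h) = |h| mod |L_in|` and `σ(h) = ∅`) with respect to `γ_∅(F)` for each
`F ∈ {NF, CR, SO}`. -/
theorem Pempty_implements_kbp
    {kin kout : ℕ} (hkin : 0 < kin)
    (O : Move kin kout → Move kin kout → Prop)
    (hO : ∀ a b, O a b → O b a) :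
    ∀ F ∈ ({NFadv kin kout, CRadv kin kout, SOadv kin kout} :
        Set (Set (Adversary kin kout))),
      Implements (gammaEmpty kin kout F) (Pempty hkin O)
        (phiP O (fun _ => (∅ : Set (Move kin kout))) (fun h => nextL hkin h.length)) := by
  intro F hF r hr m i
  have hFor : F = NFadv kin kout ∨ F = CRadv kin kout ∨ F = SOadv kin kout := by
    simpa using hF
  constructor
  · intro hgo r'2 hr'2 m' heq
    have hgo' : Pempty hkin O i ((r'2 m').2 i) = Act.go := by rw [heq]; exact hgo
    exact InterAux.phi_holds hkin O hr'2 m' i hgo'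
  · intro hK
    have hphi := hK r hr m rfl
    have hfr : isFront (r m).1 i := hphi.1
    have hloc := (InterAux.run_basic hr m).2 i
    have hex := InterAux.front_exists_mem hfr
    rw [hloc, InterAux.pempty_go_iff]
    refine ⟨hex.choose, InterAux.lane_of_mem hex, hfr, ?_⟩
    by_contra hncomp
    unfold compatAll at hncomp
    push_neg at hncomp
    obtain ⟨mv', hmv'mem, hno⟩ := hncomp
    have hm1 : 1 ≤ m := by
      rcases Nat.eq_zero_or_pos m with h0 | h1
      · exfalso
        obtain ⟨lf, hlf⟩ := hfr
        rw [h0] at hlf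
        rw [hr.1.2.2.1 lf] at hlf
        simp at hlf
      · exact h1
    obtain ⟨r', hr'2, hfi', hlane', hint', hnphi⟩ :=
      InterAux.counterexample hkin O hFor m i hm1 hex.choose
        ((minimalReading (r m).1 i).intent) mv' hmv'mem hno
    have hread : minimalReading (r' m).1 i = minimalReading (r m).1 i :=
      InterAux.reading_ext (iff_of_true hfi' hfr)
        (hlane'.trans (InterAux.lane_of_mem hex).symm) hint'
    have heq : (r' m).2 i = (r m).2 i := by
      rw [(InterAux.run_basic hr'2 m).2 i, hloc, hread]
    exact hnphi (hK r' hr'2 m heq)
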